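/- Let Φ : ℝ → ℝ be four times continuously differentiable with Φ'' ≥ 0 and with (s,t) ↦ Φ''(s)t² jointly convex (equivalently Φ''''Φ'' ≥ 2(Φ''')², class 𝔉). Let M ∈ ℝ, Z ∈ ℝ be such that M ± Z lie in the domain, and define ψ(t) = Φ(M + √t Z) + Φ(M − √t Z) − 2Φ(M) for t ∈ [0,1]. Then ψ is convex on [0,1], and consequently for all λ ∈ [0,1]: Φ(M + λZ) + Φ(M − λZ) − 2Φ(M) ≤ λ²(Φ(M + Z) + Φ(M − Z) − 2Φ(M)). -/

import Mathlib

theorem dsbs_scalar_sdpi (Φ : ℝ → ℝ) (hC4 : ContDiff ℝ 4 Φ)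
    (hΦ'' : ∀ s : ℝ, 0 ≤ iteratedDeriv 2 Φ s)
    (hjc : ConvexOn ℝ Set.univ (fun q : ℝ × ℝ => iteratedDeriv 2 Φ q.1 * q.2 ^ 2))
    (M Z : ℝ) :
    ConvexOn ℝ (Set.Icc 0 1)
        (fun t => Φ (M + Real.sqrt t * Z) + Φ (M - Real.sqrt t * Z) - 2 * Φ M) ∧
    ∀ lam : ℝ, 0 ≤ lam → lam ≤ 1 →
      Φ (M + lam * Z) + Φ (M - lam * Z) - 2 * Φ M
        ≤ lam ^ 2 * (Φ (M + Z) + Φ (M - Z) - 2 * Φ M) := by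
  -- basic differentiability facts
  have h31 : ContDiff ℝ (3 + 1) Φ := by norm_num; exact hC4
  have hd1 : Differentiable ℝ Φ := (contDiff_succ_iff_deriv.mp h31).1
  have hC3 : ContDiff ℝ 3 (deriv Φ) := (contDiff_succ_iff_deriv.mp h31).2.2
  have hd2 : Differentiable ℝ (deriv Φ) := hC3.differentiable (by norm_num)
  have hiter : ∀ x : ℝ, iteratedDeriv 2 Φ x = deriv (deriv Φ) x := by
    intro x; rw [show (2:ℕ) = 1 + 1 from rfl, iteratedDeriv_succ, iteratedDeriv_one]
  have hD2 : ∀ x : ℝ, HasDerivAt (deriv Φ) (iteratedDeriv 2 Φ x) x := by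
    intro x; rw [hiter]; exact (hd2 x).hasDerivAt
  -- k : second derivative combination, convex and even
  set k : ℝ → ℝ := fun l =>
    iteratedDeriv 2 Φ (M + l * Z) * Z ^ 2 + iteratedDeriv 2 Φ (M - l * Z) * Z ^ 2 with hk
  have hconv_line : ∀ c : ℝ, ConvexOn ℝ Set.univ
      (fun l : ℝ => iteratedDeriv 2 Φ (M + l * c) * c ^ 2) := by
    intro c
    refine ⟨convex_univ, ?_⟩
    intro x _ y _ a b ha hb hab
    have h := hjc.2 (Set.mem_univ (M + x * c, c)) (Set.mem_univ (M + y * c, c)) ha hb hab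
    have e1 : a • ((M + x * c, c) : ℝ × ℝ) + b • ((M + y * c, c) : ℝ × ℝ)
        = ((M + (a * x + b * y) * c, c) : ℝ × ℝ) := by
      rw [Prod.ext_iff]
      constructor
      · simp only [Prod.smul_mk, Prod.mk_add_mk, smul_eq_mul]
        linear_combination M * hab
      · simp only [Prod.smul_mk, Prod.mk_add_mk, smul_eq_mul]
        linear_combination c * hab
    rw [e1] at h
    simpa [smul_eq_mul] using h
  have hkconv : ConvexOn ℝ Set.univ k := by
    have h1 := hconv_line Z
    have h2 := hconv_line (-Z)
    have h2' : ConvexOn ℝ Set.univ (fun l : ℝ => iteratedDeriv 2 Φ (M - l * Z) * Z ^ 2) := by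
      have e : (fun l : ℝ => iteratedDeriv 2 Φ (M - l * Z) * Z ^ 2)
          = (fun l : ℝ => iteratedDeriv 2 Φ (M + l * -Z) * (-Z) ^ 2) := by
        funext l
        rw [show M + l * -Z = M - l * Z by ring]
        ring
      rw [e]
      exact hconv_line (-Z)
    exact h1.add h2'
  have hkeven : ∀ l : ℝ, k (-l) = k l := by
    intro l
    simp only [hk]
    rw [show M + -l * Z = M - l * Z by ring, show M - -l * Z = M + l * Z by ring]
    ring
  -- k is monotone on [0, ∞)
  have hkmono : ∀ a b : ℝ, 0 ≤ a → a ≤ b → k a ≤ k b := by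
    intro a b ha hab
    rcases eq_or_lt_of_le (ha.trans hab) with hb | hb
    · have : a = 0 := le_antisymm (hab.trans hb.symm.le) ha
      rw [this, ← hb]
    · have hw1 : 0 ≤ (b - a) / (2 * b) := div_nonneg (by linarith) (by linarith)
      have hw2 : 0 ≤ (b + a) / (2 * b) := div_nonneg (by linarith) (by linarith)
      have hsum : (b - a) / (2 * b) + (b + a) / (2 * b) = 1 := by
        rw [← add_div, show b - a + (b + a) = 2 * b by ring,
          div_self (by positivity : (2:ℝ) * b ≠ 0)]
      have hcomb := hkconv.2 (Set.mem_univ (-b)) (Set.mem_univ b) hw1 hw2 hsum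
      simp only [smul_eq_mul, hkeven b] at hcomb
      have hpt : (b - a) / (2 * b) * (-b) + (b + a) / (2 * b) * b = a := by
        field_simp; ring
      rw [hpt] at hcomb
      calc k a ≤ (b - a) / (2 * b) * k b + (b + a) / (2 * b) * k b := hcomb
        _ = k b := by rw [← add_mul, hsum, one_mul]
  -- ξ and its derivative
  set ξ : ℝ → ℝ := fun l => (deriv Φ (M + l * Z) - deriv Φ (M - l * Z)) * Z with hξ
  have hξd : ∀ l : ℝ, HasDerivAt ξ (k l) l := by
    intro l
    have hin1 : HasDerivAt (fun l : ℝ => M + l * Z) Z l := by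
      simpa using ((hasDerivAt_id l).mul_const Z).const_add M
    have hin2 : HasDerivAt (fun l : ℝ => M - l * Z) (-Z) l := by
      simpa using ((hasDerivAt_id l).mul_const Z).const_sub M
    have h1 := (hD2 (M + l * Z)).comp l hin1
    have h2 := (hD2 (M - l * Z)).comp l hin2
    have := (h1.sub h2).mul_const Z
    refine this.congr_deriv ?_
    simp only [hk]; ring
  have hξ0 : ξ 0 = 0 := by simp [hξ]
  -- ξ is convex on [0,1]
  have hξconv : ConvexOn ℝ (Set.Icc (0:ℝ) 1) ξ :=
    MonotoneOn.convexOn_of_deriv (convex_Icc 0 1)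
      (fun x _ => ((hξd x).continuousAt).continuousWithinAt)
      (fun x _ => ((hξd x).differentiableAt).differentiableWithinAt)
      (by
        intro x hx y hy hxy
        rw [(hξd x).deriv, (hξd y).deriv]
        rw [interior_Icc] at hx hy
        exact hkmono x y hx.1.le hxy)
  -- slope of ξ through origin is monotone: ξ a * b ≤ ξ b * a for 0 < a ≤ b ≤ 1
  have hslope : ∀ a b : ℝ, 0 < a → a ≤ b → b ≤ 1 → ξ a / (2 * a) ≤ ξ b / (2 * b) := by
    intro a b ha hab hb1
    have hb : 0 < b := ha.trans_le hab
    have h0m : (0:ℝ) ∈ Set.Icc (0:ℝ) 1 := by constructor <;> norm_num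
    have hbm : b ∈ Set.Icc (0:ℝ) 1 := ⟨hb.le, hb1⟩
    have hw1 : 0 ≤ 1 - a / b := by
      have : a / b ≤ 1 := (div_le_one hb).mpr hab
      linarith
    have hw2 : 0 ≤ a / b := by positivity
    have hcomb := hξconv.2 h0m hbm hw1 hw2 (by ring)
    simp only [smul_eq_mul, mul_zero, zero_add, hξ0, add_zero] at hcomb
    rw [div_mul_cancel₀ a (ne_of_gt hb)] at hcomb
    have hξab : ξ a ≤ a / b * ξ b := by linarith [hcomb]
    rw [div_le_div_iff₀ (by positivity) (by positivity)]
    have hmul := mul_le_mul_of_nonneg_right hξab (by positivity : (0:ℝ) ≤ 2 * b)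
    have heq : a / b * ξ b * (2 * b) = ξ b * (2 * a) := by
      field_simp
    linarith [hmul, heq.le, heq.ge]
  -- ψ and its derivative on (0,1)
  set ψ : ℝ → ℝ :=
    fun t => Φ (M + Real.sqrt t * Z) + Φ (M - Real.sqrt t * Z) - 2 * Φ M with hψdef
  have hψd : ∀ t : ℝ, 0 < t →
      HasDerivAt ψ (ξ (Real.sqrt t) * (1 / (2 * Real.sqrt t))) t := by
    intro t ht
    have hst : (0:ℝ) < Real.sqrt t := Real.sqrt_pos.mpr ht
    have hsq : HasDerivAt Real.sqrt (1 / (2 * Real.sqrt t)) t :=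
      Real.hasDerivAt_sqrt (ne_of_gt ht)
    have hin1 : HasDerivAt (fun t => M + Real.sqrt t * Z)
        (1 / (2 * Real.sqrt t) * Z) t := by
      simpa using (hsq.mul_const Z).const_add M
    have hin2 : HasDerivAt (fun t => M - Real.sqrt t * Z)
        (-(1 / (2 * Real.sqrt t) * Z)) t := by
      simpa using (hsq.mul_const Z).const_sub M
    have h1 := ((hd1 (M + Real.sqrt t * Z)).hasDerivAt).comp t hin1
    have h2 := ((hd1 (M - Real.sqrt t * Z)).hasDerivAt).comp t hin2
    have := (h1.add h2).sub_const (2 * Φ M)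
    refine this.congr_deriv ?_
    simp only [hξ]; ring
  have hψcont : ContinuousOn ψ (Set.Icc (0:ℝ) 1) := by
    apply ContinuousOn.sub
    apply ContinuousOn.add
    · exact (hC4.continuous.comp
        (continuous_const.add (Real.continuous_sqrt.mul continuous_const))).continuousOn
    · exact (hC4.continuous.comp
        (continuous_const.sub (Real.continuous_sqrt.mul continuous_const))).continuousOn
    · exact continuousOn_const
  have hψconv : ConvexOn ℝ (Set.Icc (0:ℝ) 1) ψ := by
    apply MonotoneOn.convexOn_of_deriv (convex_Icc 0 1) hψcont
    · intro x hx
      rw [interior_Icc] at hx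
      exact ((hψd x hx.1).differentiableAt).differentiableWithinAt
    · intro x hx y hy hxy
      rw [interior_Icc] at hx hy
      rw [(hψd x hx.1).deriv, (hψd y hy.1).deriv]
      have hsx : 0 < Real.sqrt x := Real.sqrt_pos.mpr hx.1
      have hmono : Real.sqrt x ≤ Real.sqrt y := Real.sqrt_le_sqrt hxy
      have hy1 : Real.sqrt y ≤ 1 := by
        rw [show (1:ℝ) = Real.sqrt 1 by simp]
        exact Real.sqrt_le_sqrt hy.2.le
      have := hslope (Real.sqrt x) (Real.sqrt y) hsx hmono hy1
      calc ξ (Real.sqrt x) * (1 / (2 * Real.sqrt x))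
          = ξ (Real.sqrt x) / (2 * Real.sqrt x) := by ring
        _ ≤ ξ (Real.sqrt y) / (2 * Real.sqrt y) := this
        _ = ξ (Real.sqrt y) * (1 / (2 * Real.sqrt y)) := by ring
  refine ⟨hψconv, ?_⟩
  intro lam h0 h1
  have hψ0 : ψ 0 = 0 := by simp [hψdef]; ring
  have hlam2 : lam ^ 2 ≤ 1 := by nlinarith
  have hlam2' : 0 ≤ lam ^ 2 := by positivity
  have h0m : (0:ℝ) ∈ Set.Icc (0:ℝ) 1 := by constructor <;> norm_num
  have h1m : (1:ℝ) ∈ Set.Icc (0:ℝ) 1 := by constructor <;> norm_num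
  have key := hψconv.2 h0m h1m (by linarith : (0:ℝ) ≤ 1 - lam ^ 2) hlam2' (by ring)
  rw [hψ0] at key
  simp only [smul_eq_mul, mul_zero, zero_add, mul_one] at key
  have hsq : Real.sqrt (lam ^ 2) = lam := by
    rw [Real.sqrt_sq h0]
  have hψlam : ψ (lam ^ 2) = Φ (M + lam * Z) + Φ (M - lam * Z) - 2 * Φ M := by
    simp [hψdef, hsq]
  have hψ1 : ψ 1 = Φ (M + Z) + Φ (M - Z) - 2 * Φ M := by
    simp [hψdef]
  rw [hψlam, hψ1] at key
  linarith [key]
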